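/- Let $m \geq 3$ and suppose there exists a surjective group homomorphism $\phi : (\mathbb{Z}/2)^m / \langle (1,1,\dots,1) \rangle \to (\mathbb{Z}/2)^2$ (equivalently, a surjective homomorphism $\phi$ from the group $F = \langle a_1,\dots,a_m : a_i^2 = 1, a_i a_j = a_j a_i, a_1 a_2 \cdots a_m = 1\rangle$ onto $(\mathbb{Z}/2)^2$) such that $\phi(a_i) \neq 1$ for all $i$, and such that $\phi(a_{i+1}) = \rho(\phi(a_i))$ (indices mod $m$) for some automorphism $\rho$ of $(\mathbb{Z}/2)^2$. Then $m$ is divisible by $3$ or by $4$. -/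

import Mathlib

lemma two_torsion : ∀ x : ZMod 2 × ZMod 2, x + x = 0 := by decide

lemma third_elem (v w x : ZMod 2 × ZMod 2) (hv : v ≠ 0) (hw : w ≠ 0) (hvw : v ≠ w)
    (hx0 : x ≠ 0) (hxv : x ≠ v) (hxw : x ≠ w) : x = v + w := by revert v w x; decide

/-- Let `m ≥ 3`.  A surjective homomorphism from
`F = ⟨a₁,…,a_m : aᵢ² = 1, commuting, a₁⋯a_m = 1⟩` onto `(ℤ/2)²` is encoded by
its values `f i` on the generators, indexed cyclically by `ZMod m`, with
`∑ i, f i = 0` (the product relation) and the image of `f` generating `(ℤ/2)²`.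
If each `f i` is nontrivial and `f (i+1) = ρ (f i)` for some automorphism `ρ`
of `(ℤ/2)²`, then `m` is divisible by `3` or by `4`. -/
theorem stmt_4 (m : ℕ) [NeZero m] (hm : 3 ≤ m) (f : ZMod m → ZMod 2 × ZMod 2)
    (hsum : ∑ i, f i = 0)
    (hne : ∀ i, f i ≠ 0)
    (hsurj : AddSubgroup.closure (Set.range f) = ⊤)
    (ρ : AddAut (ZMod 2 × ZMod 2)) (hρ : ∀ i, f (i + 1) = ρ (f i)) :
    3 ∣ m ∨ 4 ∣ m := by
  have hcast : ∀ a : ZMod m, ((a.val : ℕ) : ZMod m) = a := ZMod.natCast_rightInverse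
  set v := f 0 with hv
  have hv0 : v ≠ 0 := hne 0
  have key : ∀ n : ℕ, f (n : ZMod m) = (n • ρ) v := by
    intro n
    induction n with
    | zero => simp [hv]
    | succ n ih =>
      have : ((n + 1 : ℕ) : ZMod m) = (n : ZMod m) + 1 := by push_cast; ring
      rw [this, hρ, ih, succ_nsmul', AddAut.add_apply]
  have hmv : (m • ρ) v = v := by
    have := key m
    rw [ZMod.natCast_self, ← hv] at this
    exact this.symm
  set w := ρ v with hw
  have hw0 : w ≠ 0 := by
    intro h
    exact hv0 (ρ.injective (by simpa [hw] using h))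
  by_cases hvw : w = v
  · -- constant case: contradiction with surjectivity
    exfalso
    have hconstpow : ∀ n : ℕ, (n • ρ) v = v := by
      intro n
      induction n with
      | zero => simp
      | succ n ih => rw [succ_nsmul', AddAut.add_apply, ih, ← hw, hvw]
    have hconst : ∀ i : ZMod m, f i = v := by
      intro i
      have h1 := key i.val
      rwa [hcast i, hconstpow] at h1
    have hle : AddSubgroup.closure (Set.range f) ≤ AddSubgroup.zmultiples v := by
      rw [AddSubgroup.closure_le]
      rintro x ⟨i, rfl⟩
      rw [hconst i]
      exact AddSubgroup.mem_zmultiples v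
    obtain ⟨x, hx0, hxv⟩ : ∃ x : ZMod 2 × ZMod 2, x ≠ 0 ∧ x ≠ v := by
      by_cases h : v = (1, 0)
      · exact ⟨(0, 1), by decide, by rw [h]; decide⟩
      · exact ⟨(1, 0), by decide, fun h' => h h'.symm⟩
    have hxmem : x ∈ AddSubgroup.zmultiples v := by
      apply hle
      rw [hsurj]
      trivial
    obtain ⟨k, hk⟩ := AddSubgroup.mem_zmultiples_iff.mp hxmem
    rcases Int.even_or_odd k with ⟨c, hc⟩ | ⟨c, hc⟩
    · rw [hc, add_zsmul, two_torsion] at hk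
      exact hx0 hk.symm
    · have hc' : k = c + c + 1 := by omega
      rw [hc', add_zsmul, add_zsmul, two_torsion, one_zsmul, zero_add] at hk
      exact hxv hk.symm
  · have hρw0 : ρ w ≠ 0 := by
      intro h
      exact hw0 (ρ.injective (by simpa using h))
    have hρww : ρ w ≠ w := by
      intro h
      exact hvw (ρ.injective (h.trans hw))
    by_cases hρwv : ρ w = v
    · -- period 2 case
      have hper : ∀ n : ℕ, ((2 * n) • ρ) v = v := by
        intro n
        induction n with
        | zero => simp
        | succ n ih =>
          have h2 : 2 * (n + 1) = (2 * n + 1) + 1 := by ring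
          rw [h2, succ_nsmul', AddAut.add_apply, succ_nsmul', AddAut.add_apply, ih, ← hw, hρwv]
      have hper1 : ∀ n : ℕ, ((2 * n + 1) • ρ) v = w := by
        intro n
        rw [succ_nsmul', AddAut.add_apply, hper, hw]
      -- m is even
      have hmeven : m % 2 = 0 := by
        rcases Nat.even_or_odd m with ⟨c, hc⟩ | ⟨c, hc⟩
        · omega
        · exfalso
          rw [hc] at hmv
          rw [hper1] at hmv
          exact hvw hmv
      obtain ⟨k, hk⟩ : ∃ k, m = 2 * k := ⟨m / 2, by omega⟩
      -- rewrite the sum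
      have hsum' : ∑ n ∈ Finset.range m, (n • ρ) v = 0 := by
        rw [← hsum]
        refine (Finset.sum_nbij' (fun a : ZMod m => a.val) (fun n : ℕ => (n : ZMod m))
          ?_ ?_ ?_ ?_ ?_).symm
        · intro a _; exact Finset.mem_range.mpr (ZMod.val_lt a)
        · intro n _; exact Finset.mem_univ _
        · intro a _; exact hcast a
        · intro n hn; exact ZMod.val_cast_of_lt (Finset.mem_range.mp hn)
        · intro a _
          have h1 := key a.val
          rwa [hcast a] at h1
      have hsum2 : ∀ j : ℕ, ∑ n ∈ Finset.range (2 * j), (n • ρ) v = j • (v + w) := by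
        intro j
        induction j with
        | zero => simp
        | succ j ih =>
          have h2 : 2 * (j + 1) = (2 * j) + 1 + 1 := by ring
          rw [h2, Finset.sum_range_succ, Finset.sum_range_succ, ih, hper1, hper, succ_nsmul]
          abel
      rw [hk, hsum2 k] at hsum'
      have hu0 : v + w ≠ 0 := by
        intro h
        apply hvw
        have h2 := two_torsion v
        have h1 : v + w = v + v := by rw [h, h2]
        exact add_left_cancel h1
      have hkeven : k % 2 = 0 := by
        rcases Nat.even_or_odd k with ⟨c, hc⟩ | ⟨c, hc⟩
        · omega
        · exfalso
          have hc' : k = c + c + 1 := by omega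
          rw [hc', add_nsmul, add_nsmul, two_torsion, one_nsmul, zero_add] at hsum'
          exact hu0 hsum'
      right
      omega
    · -- period 3 case
      left
      have hρwu : ρ w = v + w :=
        third_elem v w (ρ w) hv0 hw0 (fun h => hvw h.symm) hρw0 hρwv hρww
      have hρu : ρ (v + w) = v := by
        rw [map_add, ← hw, hρwu]
        have h2 := two_torsion w
        rw [show w + (v + w) = v + (w + w) by abel, h2, add_zero]
      have hper : ∀ n : ℕ, ((3 * n) • ρ) v = v := by
        intro n
        induction n with
        | zero => simp
        | succ n ih =>
          have h3 : 3 * (n + 1) = (3 * n + 1 + 1) + 1 := by ring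
          rw [h3, succ_nsmul', AddAut.add_apply, succ_nsmul', AddAut.add_apply,
            succ_nsmul', AddAut.add_apply, ih, ← hw, hρwu, hρu]
      have hmod : ((m % 3) • ρ) v = v := by
        have hsplit : m = m % 3 + 3 * (m / 3) := by omega
        rw [hsplit, add_nsmul, AddAut.add_apply, hper] at hmv
        exact hmv
      have h3 : m % 3 = 0 ∨ m % 3 = 1 ∨ m % 3 = 2 := by omega
      rcases h3 with h | h | h
      · omega
      · exfalso
        rw [h, one_nsmul, ← hw] at hmod
        exact hvw hmod
      · exfalso
        rw [h, succ_nsmul', AddAut.add_apply, one_nsmul, ← hw, hρwu] at hmod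
        have h0 : w = 0 := by
          have h1 : v + w = v + 0 := by rw [add_zero, hmod]
          exact add_left_cancel h1
        exact hw0 h0
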